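/- Let e be an edge of a nondegenerate tetrahedron K shared by faces f₋ and f₊ with outward unit normals n₋, n₊, and let s be a unit tangent to e. The space N^e = { S ∈ S : Q_{n₋} S Q_{n₋} = 0 and Q_{n₊} S Q_{n₊} = 0 } of constant symmetric matrices is one-dimensional, spanned by G_e = n₋ n₊ᵀ + n₊ n₋ᵀ; moreover G_e s = 0 and m₋ᵀ G_e m₋ = m₊ᵀ G_e m₊ = 0, where m_± is the unit vector in f_± normal to e pointing into f_±. -/
import Mathlib


open Matrix

noncomputable section

abbrev V3 : Type := Fin 3 → ℝ
abbrev M3 : Type := Matrix (Fin 3) (Fin 3) ℝ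

/-- Euclidean dot product on `ℝ³`. -/
def dot3 (a b : V3) : ℝ := ∑ i, a i * b i

/-- Partial derivative in the `i`-th coordinate direction. -/
noncomputable def pd (i : Fin 3) (f : V3 → ℝ) (x : V3) : ℝ := fderiv ℝ f x (Pi.single i 1)

/-- Gradient of a scalar field. -/
noncomputable def vgrad (f : V3 → ℝ) (x : V3) : V3 := fun i => pd i f x

/-- Curl of a vector field on `ℝ³`. -/
noncomputable def vcurl (v : V3 → V3) (x : V3) : V3 :=
  ![pd 1 (fun y => v y 2) x - pd 2 (fun y => v y 1) x,
    pd 2 (fun y => v y 0) x - pd 0 (fun y => v y 2) x,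
    pd 0 (fun y => v y 1) x - pd 1 (fun y => v y 0) x]

/-- Divergence of a vector field on `ℝ³`. -/
noncomputable def vdiv (v : V3 → V3) (x : V3) : ℝ := ∑ i, pd i (fun y => v y i) x

/-- Row-wise curl of a matrix field. -/
noncomputable def mcurl (T : V3 → M3) (x : V3) : M3 :=
  Matrix.of fun i j => vcurl (fun y => T y i) x j

/-- Row-wise divergence of a matrix field. -/
noncomputable def mdiv (T : V3 → M3) (x : V3) : V3 := fun i => vdiv (fun y => T y i) x

/-- Gradient of a vector field: the rows are the gradients of the components. -/
noncomputable def mgrad (v : V3 → V3) (x : V3) : M3 :=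
  Matrix.of fun i j => pd j (fun y => v y i) x

/-- Symmetric gradient (linearized strain) of a vector field. -/
noncomputable def eps (v : V3 → V3) (x : V3) : M3 := (2⁻¹ : ℝ) • (mgrad v x + (mgrad v x)ᵀ)

/-- Column-wise curl: `curl* T = (curl Tᵀ)ᵀ`. -/
noncomputable def mcurlstar (T : V3 → M3) (x : V3) : M3 := (mcurl (fun y => (T y)ᵀ) x)ᵀ

/-- The second order operator `curl curl*`. -/
noncomputable def ccs (T : V3 → M3) (x : V3) : M3 := mcurl (fun y => mcurlstar T y) x

/-- Axial vector of a (skew-symmetric) matrix. -/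
def vect (A : M3) : V3 := ![A 2 1, A 0 2, A 1 0]

/-- Skew-symmetric part of a matrix. -/
def skw (A : M3) : M3 := (2⁻¹ : ℝ) • (A - Aᵀ)

/-- The algebraic operator `Ξ T = Tᵀ - tr(T) I`. -/
def Xi (A : M3) : M3 := Aᵀ - A.trace • (1 : M3)

/-- `f` is (the restriction of) a polynomial of total degree at most `k`. -/
def IsPolyDeg (k : ℕ) (f : V3 → ℝ) : Prop :=
  ∃ q : MvPolynomial (Fin 3) ℝ, q.totalDegree ≤ k ∧ ∀ x, f x = MvPolynomial.eval x q

/-- Vector-valued polynomial field of degree at most `k`. -/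
def IsPolyVDeg (k : ℕ) (v : V3 → V3) : Prop := ∀ i, IsPolyDeg k (fun x => v x i)

/-- Matrix-valued polynomial field of degree at most `k`. -/
def IsPolyMDeg (k : ℕ) (T : V3 → M3) : Prop := ∀ i j, IsPolyDeg k (fun x => T x i j)


section EdgeAux

lemma dot3_eq (a b : V3) : dot3 a b = a ⬝ᵥ b := rfl

lemma vmv_mulVec (a b v : V3) : vecMulVec a b *ᵥ v = (b ⬝ᵥ v) • a := by
  ext i
  simp only [Matrix.mulVec, dotProduct, Matrix.vecMulVec_apply, Pi.smul_apply,
    smul_eq_mul]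
  rw [Finset.sum_mul]
  exact Finset.sum_congr rfl fun k _ => by ring

lemma mul_vmv (M : M3) (a b : V3) : M * vecMulVec a b = vecMulVec (M *ᵥ a) b := by
  ext i j
  simp only [Matrix.mul_apply, Matrix.vecMulVec_apply, Matrix.mulVec, dotProduct]
  rw [Finset.sum_mul]
  exact Finset.sum_congr rfl fun k _ => by ring

lemma vmv_mul (a b : V3) (M : M3) : vecMulVec a b * M = vecMulVec a (Mᵀ *ᵥ b) := by
  ext i j
  simp only [Matrix.mul_apply, Matrix.vecMulVec_apply, Matrix.mulVec, dotProduct,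
    Matrix.transpose_apply]
  rw [Finset.mul_sum]
  exact Finset.sum_congr rfl fun k _ => by ring

lemma vmv_transpose (a b : V3) : (vecMulVec a b)ᵀ = vecMulVec b a := by
  ext i j
  simp only [Matrix.transpose_apply, Matrix.vecMulVec_apply]
  ring

lemma vmv_smul_left (c : ℝ) (a b : V3) : vecMulVec (c • a) b = c • vecMulVec a b := by
  ext i j
  simp only [Matrix.vecMulVec_apply, Pi.smul_apply, Matrix.smul_apply, smul_eq_mul]
  ring

lemma vmv_smul_right (c : ℝ) (a b : V3) : vecMulVec a (c • b) = c • vecMulVec a b := by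
  ext i j
  simp only [Matrix.vecMulVec_apply, Pi.smul_apply, Matrix.smul_apply, smul_eq_mul]
  ring

/-- from `Q_n S Q_n = 0` with `|n| = 1` and `S` symmetric, `S = n uᵀ + u nᵀ`. -/
lemma edge_decomp (n : V3) (hn : n ⬝ᵥ n = 1) (S : M3) (hS : Sᵀ = S)
    (h : (1 - vecMulVec n n) * S * (1 - vecMulVec n n) = 0) :
    ∃ u : V3, S = vecMulVec n u + vecMulVec u n := by
  set w : V3 := S *ᵥ n with hw
  set α : ℝ := n ⬝ᵥ w with hα
  refine ⟨w - (α / 2) • n, ?_⟩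
  have hexp : (1 - vecMulVec n n) * S * (1 - vecMulVec n n)
      = S - vecMulVec n n * S - S * vecMulVec n n
        + vecMulVec n n * S * vecMulVec n n := by noncomm_ring
  have h1 : vecMulVec n n * S = vecMulVec n w := by
    rw [vmv_mul, hS, hw]
  have h2 : S * vecMulVec n n = vecMulVec w n := by
    rw [mul_vmv, hw]
  have h3 : vecMulVec n w * vecMulVec n n = α • vecMulVec n n := by
    rw [vmv_mul, vmv_transpose, vmv_mulVec, vmv_smul_right]
  rw [hexp, h1, h2, h3] at h
  have hS' : S = vecMulVec n w + vecMulVec w n - α • vecMulVec n n := by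
    have h' : S - (vecMulVec n w + vecMulVec w n - α • vecMulVec n n) = 0 := by
      rw [← h]; abel
    exact sub_eq_zero.mp h' 
  rw [hS']
  ext i j
  simp only [Matrix.add_apply, Matrix.sub_apply, Matrix.smul_apply, Matrix.vecMulVec_apply,
    Pi.smul_apply, Pi.sub_apply, smul_eq_mul]
  ring

lemma symm_vmv_zero (a b : V3) (ha : a ≠ 0)
    (h : vecMulVec a b + vecMulVec b a = 0) : b = 0 := by
  have hβ : a ⬝ᵥ a ≠ 0 := fun h0 => ha (dotProduct_self_eq_zero.mp h0)
  have h1 : (b ⬝ᵥ a) • a + (a ⬝ᵥ a) • b = 0 := by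
    have := congrArg (fun M => M *ᵥ a) h
    simpa only [Matrix.add_mulVec, vmv_mulVec, Matrix.zero_mulVec] using this
  have h2 : (b ⬝ᵥ a) * (a ⬝ᵥ a) + (a ⬝ᵥ a) * (b ⬝ᵥ a) = 0 := by
    have := congrArg (fun v => v ⬝ᵥ a) h1
    simpa only [add_dotProduct, smul_dotProduct, smul_eq_mul,
      zero_dotProduct, dotProduct_comm b a] using this
  have hba : b ⬝ᵥ a = 0 := by
    rcases mul_eq_zero.mp (by linarith [h2] : (b ⬝ᵥ a) * (a ⬝ᵥ a) = 0) with h' | h'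
    · exact h'
    · exact absurd h' hβ
  have h3 : (a ⬝ᵥ a) • b = 0 := by
    rw [hba, zero_smul, zero_add] at h1
    exact h1
  rcases smul_eq_zero.mp h3 with h' | h'
  · exact absurd h' hβ
  · exact h'

end EdgeAux

/-- at an edge `e` of a tetrahedron with face normals `nn, np`,
the space `N^e = {S ∈ 𝕊 : Q_{nn} S Q_{nn} = 0, Q_{np} S Q_{np} = 0}` is spanned by
`G_e = nn npᵀ + np nnᵀ`, which moreover satisfies `G_e s = 0` and
`mmᵀ G_e mm = mpᵀ G_e mp = 0`. -/
theorem edge_space_one_dimensional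
    (s nn np mm mp : V3)
    (hs : dot3 s s = 1) (hnn : dot3 nn nn = 1) (hnp : dot3 np np = 1)
    (hmm : dot3 mm mm = 1) (hmp : dot3 mp mp = 1)
    (hsnn : dot3 s nn = 0) (hsnp : dot3 s np = 0)
    (hmms : dot3 mm s = 0) (hmps : dot3 mp s = 0)
    (hmmnn : dot3 mm nn = 0) (hmpnp : dot3 mp np = 0)
    (hindep : LinearIndependent ℝ ![nn, np])
    (Ge : M3) (hGe : Ge = vecMulVec nn np + vecMulVec np nn) :
    -- G_e belongs to N^e ...
    Geᵀ = Ge ∧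
    (1 - vecMulVec nn nn) * Ge * (1 - vecMulVec nn nn) = 0 ∧
    (1 - vecMulVec np np) * Ge * (1 - vecMulVec np np) = 0 ∧
    Ge ≠ 0 ∧
    -- ... and spans it
    (∀ S : M3, Sᵀ = S →
      (1 - vecMulVec nn nn) * S * (1 - vecMulVec nn nn) = 0 →
      (1 - vecMulVec np np) * S * (1 - vecMulVec np np) = 0 →
      ∃ c : ℝ, S = c • Ge) ∧
    -- extra algebraic properties
    Ge *ᵥ s = 0 ∧ dot3 mm (Ge *ᵥ mm) = 0 ∧ dot3 mp (Ge *ᵥ mp) = 0 := by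
  
  have hli := linearIndependent_fin2.mp hindep
  simp only [Matrix.cons_val_one, Matrix.head_cons, Matrix.cons_val_zero] at hli
  obtain ⟨hnp0, hnotc⟩ := hli
  have hnn' : nn ⬝ᵥ nn = 1 := hnn
  have hnp' : np ⬝ᵥ np = 1 := hnp
  have hGeT : Geᵀ = Ge := by
    rw [hGe, Matrix.transpose_add, vmv_transpose, vmv_transpose, add_comm]
  have hQnT : ∀ n : V3, (1 - vecMulVec n n)ᵀ = 1 - vecMulVec n n := by
    intro n; rw [Matrix.transpose_sub, Matrix.transpose_one, vmv_transpose]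
  have hQmul : ∀ n : V3, n ⬝ᵥ n = 1 → (1 - vecMulVec n n) *ᵥ n = 0 := by
    intro n hn
    rw [Matrix.sub_mulVec, Matrix.one_mulVec, vmv_mulVec, hn, one_smul, sub_self]
  have hvmv0l : ∀ b : V3, vecMulVec (0 : V3) b = 0 := by
    intro b; ext i j; simp [Matrix.vecMulVec_apply]
  have hvmv0r : ∀ a : V3, vecMulVec a (0 : V3) = 0 := by
    intro a; ext i j; simp [Matrix.vecMulVec_apply]
  have hmemb : ∀ n : V3, n ⬝ᵥ n = 1 → ∀ u : V3,
      (1 - vecMulVec n n) * (vecMulVec n u + vecMulVec u n) * (1 - vecMulVec n n) = 0 := by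
    intro n hn u
    rw [mul_add, mul_vmv, mul_vmv, hQmul n hn, hvmv0l, zero_add, vmv_mul, hQnT,
      hQmul n hn, hvmv0r]
  refine ⟨hGeT, ?_, ?_, ?_, ?_, ?_, ?_, ?_⟩
  · rw [hGe]; exact hmemb nn hnn' np
  · rw [hGe, add_comm]; exact hmemb np hnp' nn
  · intro h0
    have : Ge *ᵥ np = 0 := by rw [h0, Matrix.zero_mulVec]
    rw [hGe, Matrix.add_mulVec, vmv_mulVec, vmv_mulVec, hnp'] at this
    rw [one_smul] at this
    have h' := eq_neg_of_add_eq_zero_left this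
    rw [← neg_smul] at h'
    exact hnotc _ h'.symm
  · intro S hS h1 h2
    obtain ⟨u, hu⟩ := edge_decomp nn hnn' S hS h1
    set a : V3 := (1 - vecMulVec np np) *ᵥ nn with hadef
    set b : V3 := (1 - vecMulVec np np) *ᵥ u with hbdef
    have ha0 : a ≠ 0 := by
      intro h0
      rw [hadef, Matrix.sub_mulVec, Matrix.one_mulVec, vmv_mulVec, sub_eq_zero] at h0
      exact hnotc (np ⬝ᵥ nn) h0.symm
    have hb0 : b = 0 := by
      apply symm_vmv_zero a b ha0
      have : (1 - vecMulVec np np) * S * (1 - vecMulVec np np)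
          = vecMulVec a b + vecMulVec b a := by
        rw [hu, mul_add, add_mul, mul_vmv, mul_vmv, vmv_mul, vmv_mul, hQnT, hadef, hbdef]
      rw [← this, h2]
    have hub : u = (np ⬝ᵥ u) • np := by
      have := hb0
      rw [hbdef, Matrix.sub_mulVec, Matrix.one_mulVec, vmv_mulVec, sub_eq_zero] at this
      exact this
    obtain ⟨c, hc⟩ : ∃ c : ℝ, u = c • np := ⟨np ⬝ᵥ u, hub⟩
    refine ⟨c, ?_⟩
    rw [hu, hc, hGe, vmv_smul_left, vmv_smul_right, smul_add]
  · rw [hGe, Matrix.add_mulVec, vmv_mulVec, vmv_mulVec,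
      dotProduct_comm np s, dotProduct_comm nn s,
      ← dot3_eq, ← dot3_eq, hsnp, hsnn, zero_smul, zero_smul, add_zero]
  · rw [hGe, Matrix.add_mulVec, vmv_mulVec, vmv_mulVec, dot3_eq]
    have e1 : mm ⬝ᵥ nn = 0 := hmmnn
    have e2 : nn ⬝ᵥ mm = 0 := (dotProduct_comm nn mm).trans hmmnn
    simp [dotProduct_add, dotProduct_smul, e1, e2]
  · rw [hGe, Matrix.add_mulVec, vmv_mulVec, vmv_mulVec, dot3_eq]
    have e1 : mp ⬝ᵥ np = 0 := hmpnp
    have e2 : np ⬝ᵥ mp = 0 := (dotProduct_comm np mp).trans hmpnp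
    simp [dotProduct_add, dotProduct_smul, e1, e2]
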